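/- (Exact Weyl relation.) Let A be a complex unital Banach algebra and a, b ∈ A, and set z := a*b - b*a. If z commutes with a and z commutes with b, then exp a * exp b = exp z * (exp b * exp a). -/

import Mathlib

open NormedSpace

section aux

variable {A : Type*} [NormedRing A] [NormedAlgebra ℂ A] [CompleteSpace A]

lemma weyl_pow_comm (a b z : A) (hz : z = a * b - b * a) (hza : z * a = a * z) :
    ∀ n : ℕ, a ^ (n + 1) * b = b * a ^ (n + 1) + (((n : ℂ) + 1)) • (z * a ^ n) := by
  have hab : a * b = b * a + z := by rw [hz]; abel
  have haz : ∀ w : A, a * (z * w) = z * (a * w) := fun w => by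
    rw [← mul_assoc, ← hza, mul_assoc]
  intro n
  induction n with
  | zero => simpa using hab
  | succ n ih =>
    calc a ^ (n + 1 + 1) * b
        = a * (a ^ (n + 1) * b) := by rw [pow_succ' a (n + 1), mul_assoc]
      _ = a * (b * a ^ (n + 1)) + ((n : ℂ) + 1) • (z * (a * a ^ n)) := by
          rw [ih, mul_add, mul_smul_comm, haz]
      _ = (a * b) * a ^ (n + 1) + ((n : ℂ) + 1) • (z * a ^ (n + 1)) := by
          rw [← mul_assoc, ← pow_succ']
      _ = b * (a * a ^ (n + 1)) + z * a ^ (n + 1) + ((n : ℂ) + 1) • (z * a ^ (n + 1)) := by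
          rw [hab, add_mul, mul_assoc]
      _ = b * a ^ (n + 1 + 1) + ((↑(n + 1) : ℂ) + 1) • (z * a ^ (n + 1)) := by
          rw [← pow_succ', add_assoc]
          congr 1
          have hc : ((↑(n + 1) : ℂ) + 1) = ((n : ℂ) + 1) + 1 := by push_cast; ring
          rw [hc]
          module

lemma weyl_expa_mul (a b z : A) (hz : z = a * b - b * a) (hza : z * a = a * z) :
    exp a * b = (b + z) * exp a := by
  have hsum : Summable fun n : ℕ => ((n.factorial : ℂ))⁻¹ • a ^ n :=
    expSeries_summable' (𝕂 := ℂ) a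
  have hsum1 : Summable fun n : ℕ => ((n.factorial : ℂ))⁻¹ • (b * a ^ n) := by
    simpa [mul_smul_comm] using hsum.mul_left b
  have hsum2 : Summable fun n : ℕ => ((n.factorial : ℂ))⁻¹ • (z * a ^ n) := by
    simpa [mul_smul_comm] using hsum.mul_left z
  have hstep : ∀ n : ℕ, ((n.factorial : ℂ))⁻¹ • (a ^ n * b)
      = ((n.factorial : ℂ))⁻¹ • (b * a ^ n)
        + (if n = 0 then 0 else (((n - 1).factorial : ℂ))⁻¹ • (z * a ^ (n - 1))) := by
    intro n
    match n with
    | 0 => simp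
    | (m + 1) =>
      rw [weyl_pow_comm a b z hz hza m, smul_add]
      simp only [Nat.add_sub_cancel, if_neg (Nat.succ_ne_zero m)]
      congr 1
      rw [smul_smul]
      congr 1
      have hm : ((m.factorial : ℂ)) ≠ 0 := Nat.cast_ne_zero.mpr (Nat.factorial_ne_zero m)
      have hfac : (((m + 1).factorial : ℂ)) = ((m : ℂ) + 1) * (m.factorial : ℂ) := by
        rw [Nat.factorial_succ]; push_cast; ring
      rw [hfac]
      have hm1 : ((m : ℂ) + 1) ≠ 0 := by
        have := Nat.cast_ne_zero (R := ℂ).mpr (Nat.succ_ne_zero m)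
        push_cast at this; exact this
      field_simp
  have hLHS : exp a * b = ∑' n : ℕ, ((n.factorial : ℂ))⁻¹ • (a ^ n * b) := by
    simp only [exp_eq_tsum ℂ]
    rw [← hsum.tsum_mul_right b]
    simp [smul_mul_assoc]
  have hsumif : Summable fun n : ℕ =>
      (if n = 0 then (0 : A) else (((n - 1).factorial : ℂ))⁻¹ • (z * a ^ (n - 1))) := by
    rw [← summable_nat_add_iff 1]
    simpa using hsum2
  have htsumif : (∑' n : ℕ, if n = 0 then (0 : A)
        else (((n - 1).factorial : ℂ))⁻¹ • (z * a ^ (n - 1)))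
      = ∑' n : ℕ, ((n.factorial : ℂ))⁻¹ • (z * a ^ n) := by
    rw [Summable.tsum_eq_zero_add hsumif]
    simp
  calc exp a * b = ∑' n : ℕ, ((n.factorial : ℂ))⁻¹ • (a ^ n * b) := hLHS
    _ = (∑' n : ℕ, ((n.factorial : ℂ))⁻¹ • (b * a ^ n))
        + ∑' n : ℕ, (if n = 0 then (0 : A)
            else (((n - 1).factorial : ℂ))⁻¹ • (z * a ^ (n - 1))) := by
          simp_rw [hstep]
          exact Summable.tsum_add hsum1 hsumif
    _ = b * exp a + z * exp a := by
          rw [htsumif]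
          simp only [exp_eq_tsum ℂ]
          rw [← hsum.tsum_mul_left b, ← hsum.tsum_mul_left z]
          simp [mul_smul_comm]
    _ = (b + z) * exp a := by rw [add_mul]

end aux

/-- Exact Weyl relation: if `z = [a,b]` commutes with `a` and `b`, then
`exp a * exp b = exp z * (exp b * exp a)`. -/
theorem stmt_9
    {A : Type*} [NormedRing A] [NormedAlgebra ℂ A] [CompleteSpace A]
    (a b : A) (z : A) (hz : z = a * b - b * a)
    (hza : z * a = a * z) (hzb : z * b = b * z) :
    exp a * exp b = exp z * (exp b * exp a) := by
  have key : exp a * b = (b + z) * exp a := weyl_expa_mul a b z hz hza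
  have hpow : ∀ n : ℕ, exp a * b ^ n = (b + z) ^ n * exp a := by
    intro n
    induction n with
    | zero => simp
    | succ n ih =>
      rw [pow_succ, ← mul_assoc, ih, mul_assoc, key, pow_succ, mul_assoc]
  have hsumb : Summable fun n : ℕ => ((n.factorial : ℂ))⁻¹ • b ^ n :=
    expSeries_summable' (𝕂 := ℂ) b
  have hsumbz : Summable fun n : ℕ => ((n.factorial : ℂ))⁻¹ • (b + z) ^ n :=
    expSeries_summable' (𝕂 := ℂ) (b + z)
  have eb : exp b = ∑' n : ℕ, ((n.factorial : ℂ))⁻¹ • b ^ n := by rw [exp_eq_tsum ℂ]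
  have ebz : exp (b + z) = ∑' n : ℕ, ((n.factorial : ℂ))⁻¹ • (b + z) ^ n := by
    rw [exp_eq_tsum ℂ]
  have h1 : exp a * exp b = exp (b + z) * exp a := by
    rw [eb, ebz, ← hsumb.tsum_mul_left (exp a), ← hsumbz.tsum_mul_right (exp a)]
    congr 1
    funext n
    rw [mul_smul_comm, hpow, smul_mul_assoc]
  have hcz : Commute z b := hzb
  let +nondep : NormedAlgebra ℚ A := .restrictScalars ℚ ℂ A
  rw [h1, exp_add_of_commute hcz.symm, ← (hcz.exp).eq, mul_assoc]
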